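/- Let N be a von Neumann algebra and V a commutative von Neumann subalgebra. For any two projections P, Q ∈ N, δ(P ∨ Q)_V = δ(P)_V ∨ δ(Q)_V, where ∨ denotes the join in the respective projection lattices. -/
import Mathlib


variable {H : Type*} [NormedAddCommGroup H] [InnerProductSpace ℂ H] [CompleteSpace H]

/-- A bounded operator is a projection if it is self-adjoint and idempotent. -/
def IsProjection (p : H →L[ℂ] H) : Prop :=
  IsSelfAdjoint p ∧ IsIdempotentElem p

/-- The order on projections: `P ≤ Q` iff `PQ = P`. -/
def ProjLE (p q : H →L[ℂ] H) : Prop := p * q = p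

/-- `d` is the outer daseinisation `δ(P)_V` of a projection `P` in the context `V`:
the smallest projection in `V` dominating `P` (equivalently, the infimum in the
projection lattice of `V` of `{Q ∈ P(V) : Q ≥ P}`). -/
def IsDaseinisation (V : VonNeumannAlgebra H) (P d : H →L[ℂ] H) : Prop :=
  (d ∈ V ∧ IsProjection d ∧ ProjLE P d) ∧
    ∀ Q : H →L[ℂ] H, Q ∈ V → IsProjection Q → ProjLE P Q → ProjLE d Q

/-- `J` is the join `P ∨ Q` in the projection lattice of the von Neumann algebra `W`:
the least projection in `W` dominating both `P` and `Q`. -/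
def IsProjJoin (W : VonNeumannAlgebra H) (P Q J : H →L[ℂ] H) : Prop :=
  (J ∈ W ∧ IsProjection J ∧ ProjLE P J ∧ ProjLE Q J) ∧
    ∀ S : H →L[ℂ] H, S ∈ W → IsProjection S → ProjLE P S → ProjLE Q S → ProjLE J S

/-- `M` is the meet `P ∧ Q` in the projection lattice of the von Neumann algebra `W`:
the greatest projection in `W` dominated by both `P` and `Q`. -/
def IsProjMeet (W : VonNeumannAlgebra H) (P Q M : H →L[ℂ] H) : Prop :=
  (M ∈ W ∧ IsProjection M ∧ ProjLE M P ∧ ProjLE M Q) ∧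
    ∀ S : H →L[ℂ] H, S ∈ W → IsProjection S → ProjLE S P → ProjLE S Q → ProjLE S M

/-- Let `N` be a von Neumann algebra and `V` a commutative von Neumann
subalgebra. For any two projections `P, Q ∈ N`,
`δ(P ∨ Q)_V = δ(P)_V ∨ δ(Q)_V`, where `∨` denotes the join in the respective
projection lattices. -/
theorem daseinisation_join
    (N V : VonNeumannAlgebra H)
    (hVN : ∀ x : H →L[ℂ] H, x ∈ V → x ∈ N)
    (hcomm : ∀ a b : H →L[ℂ] H, a ∈ V → b ∈ V → a * b = b * a)
    (P Q : H →L[ℂ] H) (hPN : P ∈ N) (hQN : Q ∈ N)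
    (hP : IsProjection P) (hQ : IsProjection Q)
    (J dJ dP dQ JV : H →L[ℂ] H)
    (hJ : IsProjJoin N P Q J)
    (hdJ : IsDaseinisation V J dJ)
    (hdP : IsDaseinisation V P dP)
    (hdQ : IsDaseinisation V Q dQ)
    (hJV : IsProjJoin V dP dQ JV) :
    dJ = JV := by
  obtain ⟨⟨hJN, hJproj, hPJ, hQJ⟩, hJmin⟩ := hJ
  obtain ⟨⟨hdJV, hdJproj, hJdJ⟩, hdJmin⟩ := hdJ
  obtain ⟨⟨hdPV, hdPproj, hPdP⟩, hdPmin⟩ := hdP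
  obtain ⟨⟨hdQV, hdQproj, hQdQ⟩, hdQmin⟩ := hdQ
  obtain ⟨⟨hJVV, hJVproj, hdPJV, hdQJV⟩, hJVmin⟩ := hJV
  have trans : ∀ a b c : H →L[ℂ] H, ProjLE a b → ProjLE b c → ProjLE a c := by
    intro a b c h1 h2
    unfold ProjLE at *
    calc a * c = a * b * c := by rw [h1]
    _ = a * (b * c) := by rw [mul_assoc]
    _ = a * b := by rw [h2]
    _ = a := h1
  -- P ≤ JV, Q ≤ JV
  have hPJV : ProjLE P JV := trans _ _ _ hPdP hdPJV
  have hQJV : ProjLE Q JV := trans _ _ _ hQdQ hdQJV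
  have hJJV : ProjLE J JV := hJmin JV (hVN JV hJVV) hJVproj hPJV hQJV
  have h1 : ProjLE dJ JV := hdJmin JV hJVV hJVproj hJJV
  -- dP ≤ dJ, dQ ≤ dJ
  have hPdJ : ProjLE P dJ := trans _ _ _ hPJ hJdJ
  have hQdJ : ProjLE Q dJ := trans _ _ _ hQJ hJdJ
  have hdPdJ : ProjLE dP dJ := hdPmin dJ hdJV hdJproj hPdJ
  have hdQdJ : ProjLE dQ dJ := hdQmin dJ hdJV hdJproj hQdJ
  have h2 : ProjLE JV dJ := hJVmin dJ hdJV hdJproj hdPdJ hdQdJ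
  unfold ProjLE at h1 h2
  calc dJ = dJ * JV := h1.symm
  _ = JV * dJ := hcomm _ _ hdJV hJVV
  _ = JV := h2
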